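/- Let μ be the counting measure on ℤ^n ⊂ ℝ^n, and let C > 0 be a constant such that the weak (1,1) maximal inequality L' · vol{x ∈ ℝ^n : Mν(x) > L'} ≤ C · ν(ℝ^n) holds for every finite positive Borel measure ν on ℝ^n and every L' > 0. Then for every L > 1, L · vol({x ∈ [0,1]^n : Mμ(x) > L}) ≤ C. -/

import Mathlib

open MeasureTheory Metric Filter ProbabilityTheory
open scoped ENNReal NNReal

/-- The cubic centered Hardy--Littlewood maximal function of a measure `μ` on `ℝ^n`
(with the sup norm, so that `Metric.closedBall x r` is the cube `Q(x,r)` of center `x`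
and edge length `2r`). -/
noncomputable def maximalFn {n : ℕ} (μ : Measure (Fin n → ℝ)) (x : Fin n → ℝ) : ℝ≥0∞ :=
  ⨆ (r : ℝ) (_ : 0 < r), μ (closedBall x r) / volume (closedBall x r)


/-- The counting measure on the integer lattice `ℤ^n ⊂ ℝ^n`:
`μ(A) = card (A ∩ ℤ^n)`. -/
noncomputable def latticeMeasure (n : ℕ) : Measure (Fin n → ℝ) :=
  Measure.sum fun k : Fin n → ℤ => Measure.dirac fun i => (k i : ℝ)

def icoe {n : ℕ} (k : Fin n → ℤ) : Fin n → ℝ := fun i => (k i : ℝ)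

lemma lattice_apply {n : ℕ} {s : Set (Fin n → ℝ)} (hs : MeasurableSet s) :
    latticeMeasure n s = ∑' k : Fin n → ℤ, s.indicator 1 (icoe k) := by
  rw [latticeMeasure, Measure.sum_apply _ hs]
  exact tsum_congr fun k => Measure.dirac_apply' _ hs

lemma vol_cube {n : ℕ} (x : Fin n → ℝ) {r : ℝ} (hr : 0 ≤ r) :
    volume (closedBall x r) = ENNReal.ofReal ((2*r)^n) := by
  rw [volume_pi_closedBall x hr]
  simp [Real.volume_closedBall, ← ENNReal.ofReal_pow (by linarith : (0:ℝ) ≤ 2*r)]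
  rw [ENNReal.ofReal_pow (by positivity), ENNReal.ofReal_mul (by norm_num : (0:ℝ) ≤ 2), ENNReal.ofReal_ofNat]

lemma icoe_mem_cube {n : ℕ} {k : Fin n → ℤ} {x : Fin n → ℝ} {r : ℝ} (hr : 0 ≤ r) :
    icoe k ∈ closedBall x r ↔ ∀ i, |(k i : ℝ) - x i| ≤ r := by
  simp [mem_closedBall, dist_pi_le_iff hr, Real.dist_eq, icoe]

lemma indicator_le_one {α : Type*} (s : Set α) (a : α) : s.indicator (1 : α → ℝ≥0∞) a ≤ 1 := by
  classical
  rw [Set.indicator]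
  split <;> simp

lemma count_upper {n : ℕ} (x : Fin n → ℝ) {r : ℝ} (hr : 0 ≤ r) :
    latticeMeasure n (closedBall x r) ≤ ENNReal.ofReal ((2*r+1)^n) := by
  classical
  set F : Finset (Fin n → ℤ) :=
    Fintype.piFinset fun i => Finset.Icc ⌈x i - r⌉ ⌊x i + r⌋ with hF
  have hsupp : ∀ k ∉ F, (closedBall x r).indicator (1 : (Fin n → ℝ) → ℝ≥0∞) (icoe k) = 0 := by
    intro k hk
    rw [Set.indicator_of_notMem]
    intro hmem
    apply hk
    rw [hF, Fintype.mem_piFinset]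
    intro i
    have h := (icoe_mem_cube hr).mp hmem i
    rw [abs_le] at h
    rw [Finset.mem_Icc]
    constructor
    · exact Int.ceil_le.mpr (by linarith [h.1])
    · exact Int.le_floor.mpr (by linarith [h.2])
  rw [lattice_apply measurableSet_closedBall, tsum_eq_sum hsupp]
  have h1 : ∑ k ∈ F, (closedBall x r).indicator (1 : (Fin n → ℝ) → ℝ≥0∞) (icoe k) ≤ (F.card : ℝ≥0∞) := by
    calc ∑ k ∈ F, (closedBall x r).indicator (1 : (Fin n → ℝ) → ℝ≥0∞) (icoe k)
        ≤ ∑ k ∈ F, 1 := Finset.sum_le_sum fun k _ => indicator_le_one _ _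
      _ = (F.card : ℝ≥0∞) := by simp
  refine h1.trans ?_
  have h2 : (F.card : ℝ) ≤ (2*r+1)^n := by
    rw [hF, Fintype.card_piFinset]
    push_cast
    calc (∏ i : Fin n, ((Finset.Icc ⌈x i - r⌉ ⌊x i + r⌋).card : ℝ))
        ≤ ∏ i : Fin n, (2*r+1) := by
          refine Finset.prod_le_prod (fun i _ => by positivity) (fun i _ => ?_)
          rw [Int.card_Icc]
          have h3 : ((⌊x i + r⌋ + 1 - ⌈x i - r⌉).toNat : ℝ) = ((((⌊x i + r⌋ + 1 - ⌈x i - r⌉).toNat : ℤ)) : ℝ) := by push_cast; ring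
          rw [h3, Int.toNat_eq_max]
          have h4 : ((⌊x i + r⌋:ℝ) + 1 - ⌈x i - r⌉) ≤ 2*r+1 := by
            have := Int.floor_le (x i + r)
            have := Int.le_ceil (x i - r)
            linarith
          rw [Int.cast_max]
          push_cast
          refine max_le (by linarith) (by linarith)
      _ = (2*r+1)^n := by simp
  calc (F.card : ℝ≥0∞) = ENNReal.ofReal (F.card : ℝ) := by
        simp [ENNReal.ofReal_natCast]
    _ ≤ ENNReal.ofReal ((2*r+1)^n) := ENNReal.ofReal_le_ofReal h2

lemma carath_sum {α ι : Type*} [MeasurableSpace α] (m : Measure α) (U : ι → Set α)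
    (hU : ∀ i, MeasurableSet (U i)) (hd : Pairwise (Function.onFun Disjoint U)) :
    ∀ (F : Finset ι) (S : Set α), ∑ i ∈ F, m (S ∩ U i) ≤ m S := by
  classical
  intro F
  induction F using Finset.induction with
  | empty => simp
  | @insert a F ha ih =>
    intro S
    rw [Finset.sum_insert ha]
    have key : m (S ∩ U a) + m (S \ U a) = m S := measure_inter_add_diff S (hU a)
    calc m (S ∩ U a) + ∑ i ∈ F, m (S ∩ U i)
        ≤ m (S ∩ U a) + ∑ i ∈ F, m ((S \ U a) ∩ U i) := by
          refine add_le_add le_rfl (Finset.sum_le_sum fun i hi => measure_mono (μ := m) ?_)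
          refine fun y hy => ⟨⟨hy.1, fun hya => ?_⟩, hy.2⟩
          have hne : i ≠ a := fun h => ha (h ▸ hi)
          exact Set.disjoint_left.mp (hd hne) hy.2 hya
      _ ≤ m (S ∩ U a) + m (S \ U a) := by gcongr; exact ih _
      _ = m S := key

lemma ratio_bound (n : ℕ) {L : ℝ} (hL : 1 < L) :
    ∃ ρ : ℝ, 1 ≤ ρ ∧ ∀ r : ℝ, ρ ≤ r → (2*r+1)^n ≤ L * (2*r)^n := by
  have h0 : Tendsto (fun r : ℝ => 1 + 1/(2*r)) atTop (nhds 1) := by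
    have h1 : Tendsto (fun r : ℝ => 1/(2*r)) atTop (nhds 0) := by
      have h2 : Tendsto (fun r : ℝ => 2*r) atTop atTop :=
        Tendsto.const_mul_atTop (by norm_num) tendsto_id
      rw [show (fun r : ℝ => 1/(2*r)) = (fun y : ℝ => y⁻¹) ∘ (fun r => 2*r) from funext fun r => one_div _]
      exact tendsto_inv_atTop_zero.comp h2
    simpa using tendsto_const_nhds.add h1
  have h2 : Tendsto (fun r : ℝ => (1 + 1/(2*r))^n) atTop (nhds 1) := by
    simpa using h0.pow n
  have h3 : ∀ᶠ r : ℝ in atTop, (1 + 1/(2*r))^n < L := h2.eventually_lt_const hL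
  obtain ⟨ρ₀, hρ₀⟩ := eventually_atTop.mp h3
  refine ⟨max ρ₀ 1, le_max_right _ _, fun r hr => ?_⟩
  have hr1 : (1:ℝ) ≤ r := le_trans (le_max_right _ _) hr
  have hrpos : (0:ℝ) < 2*r := by linarith
  have h4 : (1 + 1/(2*r))^n < L := hρ₀ r (le_trans (le_max_left _ _) hr)
  have h5 : (2*r+1)^n = (1 + 1/(2*r))^n * (2*r)^n := by
    rw [← mul_pow]; congr 1; field_simp
  rw [h5]
  nlinarith [pow_pos hrpos n]

lemma exists_good_radius (n : ℕ) {L : ℝ} (hL : 1 < L) :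
    ∃ ρ : ℝ, 1 ≤ ρ ∧ ∀ x : Fin n → ℝ,
      ENNReal.ofReal L < maximalFn (latticeMeasure n) x →
      ∃ r : ℝ, 0 < r ∧ r ≤ ρ ∧
        ENNReal.ofReal L * volume (closedBall x r) < latticeMeasure n (closedBall x r) := by
  obtain ⟨ρ, hρ1, hρ⟩ := ratio_bound n hL
  refine ⟨ρ, hρ1, fun x hx => ?_⟩
  rw [maximalFn, lt_iSup_iff] at hx
  obtain ⟨r, hx⟩ := hx
  rw [lt_iSup_iff] at hx
  obtain ⟨hr, hx⟩ := hx
  have hvol : volume (closedBall x r) = ENNReal.ofReal ((2*r)^n) := vol_cube x hr.le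
  have hvol0 : volume (closedBall x r) ≠ 0 := by
    rw [hvol]; simp only [ne_eq, ENNReal.ofReal_eq_zero, not_le]; positivity
  have hvolt : volume (closedBall x r) ≠ ⊤ := by rw [hvol]; exact ENNReal.ofReal_ne_top
  have key : ENNReal.ofReal L * volume (closedBall x r) < latticeMeasure n (closedBall x r) := by
    rw [ENNReal.lt_div_iff_mul_lt (Or.inl hvol0) (Or.inl hvolt)] at hx
    exact hx
  refine ⟨r, hr, ?_, key⟩
  by_contra hcon
  push_neg at hcon
  have h1 : latticeMeasure n (closedBall x r) ≤ ENNReal.ofReal L * volume (closedBall x r) := by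
    calc latticeMeasure n (closedBall x r) ≤ ENNReal.ofReal ((2*r+1)^n) := count_upper x hr.le
      _ ≤ ENNReal.ofReal (L * (2*r)^n) := ENNReal.ofReal_le_ofReal (hρ r hcon.le)
      _ = ENNReal.ofReal L * volume (closedBall x r) := by
          rw [hvol, ENNReal.ofReal_mul (by linarith : (0:ℝ) ≤ L)]
  exact absurd key (not_lt.mpr h1)

lemma lattice_eq_sum {n : ℕ} {x : Fin n → ℝ} (hx : x ∈ Set.Icc (0 : Fin n → ℝ) 1)
    {r ρ : ℝ} (hr : 0 < r) (hrρ : r ≤ ρ) {R : ℕ} (hρR : ρ + 1 ≤ (R:ℝ)) :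
    latticeMeasure n (closedBall x r)
      = ∑ k ∈ Fintype.piFinset (fun _ : Fin n => Finset.Icc (-(R:ℤ)) R),
          (closedBall x r).indicator (1 : (Fin n → ℝ) → ℝ≥0∞) (icoe k) := by
  classical
  rw [lattice_apply measurableSet_closedBall]
  refine tsum_eq_sum fun k hk => ?_
  rw [Set.indicator_of_notMem]
  intro hmem
  apply hk
  rw [Fintype.mem_piFinset]
  intro i
  have h := (icoe_mem_cube hr.le).mp hmem i
  rw [abs_le] at h
  have hx1 := hx.1 i
  have hx2 := hx.2 i
  simp only [Pi.zero_apply] at hx1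
  simp only [Pi.one_apply] at hx2
  rw [Finset.mem_Icc]
  constructor
  · have : (-(R:ℝ)) ≤ (k i : ℝ) := by linarith [h.1]
    exact_mod_cast this
  · have : (k i : ℝ) ≤ (R:ℝ) := by linarith [h.2]
    exact_mod_cast this

theorem truncation_lemma (n : ℕ) (C : ℝ) (hC : 0 < C)
    (hweak : ∀ ν : Measure (Fin n → ℝ), IsFiniteMeasure ν → ∀ L' : ℝ, 0 < L' →
      ENNReal.ofReal L' * volume {x | ENNReal.ofReal L' < maximalFn ν x}
        ≤ ENNReal.ofReal C * ν Set.univ)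
    (L : ℝ) (hL : 1 < L) :
    ENNReal.ofReal L * volume {x ∈ Set.Icc (0 : Fin n → ℝ) 1 |
      ENNReal.ofReal L < maximalFn (latticeMeasure n) x} ≤ ENNReal.ofReal C := by
  classical
  have hL0 : (0:ℝ) < L := by linarith
  set A := {x ∈ Set.Icc (0 : Fin n → ℝ) 1 |
      ENNReal.ofReal L < maximalFn (latticeMeasure n) x} with hAdef
  set U0 : Set (Fin n → ℝ) := Set.pi Set.univ fun _ => Set.Ico (0:ℝ) 1 with hU0def
  have hU0m : MeasurableSet U0 := MeasurableSet.univ_pi fun i => measurableSet_Ico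
  have hU0sub : U0 ⊆ Set.Icc (0 : Fin n → ℝ) 1 := by
    rw [← Set.pi_univ_Icc]
    exact Set.pi_mono fun i _ => by simp [Set.Ico_subset_Icc_self]
  have hIccvol : volume (Set.Icc (0 : Fin n → ℝ) 1) = 1 := by
    rw [Real.volume_Icc_pi]; simp
  have hU0vol : volume U0 = 1 := by
    rw [hU0def, volume_pi_pi]; simp [Real.volume_Ico]
  have hdiffnull : volume (Set.Icc (0 : Fin n → ℝ) 1 \ U0) = 0 := by
    rw [measure_diff hU0sub hU0m.nullMeasurableSet (by rw [hU0vol]; exact ENNReal.one_ne_top),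
      hIccvol, hU0vol, tsub_self]
  set A' := A ∩ U0 with hA'def
  have hAvol : volume A = volume A' := by
    have h1 := measure_inter_add_diff (μ := volume) A hU0m
    have hsubAU : A \ U0 ⊆ Set.Icc (0 : Fin n → ℝ) 1 \ U0 := fun y hy => ⟨hy.1.1, hy.2⟩
    have h2 : volume (A \ U0) = 0 := measure_mono_null hsubAU hdiffnull
    rw [← h1, h2, add_zero]
  obtain ⟨ρ, hρ1, hρ⟩ := exists_good_radius n hL
  set R : ℕ := ⌈ρ⌉₊ + 1 with hRdef
  have hρR : ρ + 1 ≤ (R:ℝ) := by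
    have := Nat.le_ceil ρ
    rw [hRdef]; push_cast; linarith
  set G := Fintype.piFinset (fun _ : Fin n => Finset.Icc (-(R:ℤ)) R) with hGdef
  -- the per-N inequality
  have main : ∀ N : ℕ, ENNReal.ofReal L * volume A' * (((N+1:ℕ)):ℝ≥0∞)^n
      ≤ ENNReal.ofReal C * (((2*R+N+1:ℕ)):ℝ≥0∞)^n := by
    intro N
    set B := Fintype.piFinset (fun _ : Fin n => Finset.Icc (-(R:ℤ)) ((R:ℤ)+N)) with hBdef
    set K := Fintype.piFinset (fun _ : Fin n => Finset.Icc (0:ℤ) N) with hKdef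
    set ν : Measure (Fin n → ℝ) := ∑ m ∈ B, Measure.dirac (icoe m) with hνdef
    have hνapp : ∀ s : Set (Fin n → ℝ), MeasurableSet s →
        ν s = ∑ m ∈ B, s.indicator (1 : (Fin n → ℝ) → ℝ≥0∞) (icoe m) := by
      intro s hs
      have h0 : ν s = ∑ m ∈ B, (Measure.dirac (icoe m)) s := by
        rw [hνdef, Measure.coe_finset_sum, Finset.sum_apply]
      rw [h0]
      exact Finset.sum_congr rfl fun m _ => Measure.dirac_apply' _ hs
    have hνuniv : ν Set.univ = (B.card : ℝ≥0∞) := by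
      rw [hνapp _ MeasurableSet.univ]; simp
    have hνfin : IsFiniteMeasure ν := ⟨by rw [hνuniv]; exact ENNReal.natCast_lt_top _⟩
    set T : (Fin n → ℤ) → Set (Fin n → ℝ) := fun k => (fun y => -(icoe k) + y) ⁻¹' A' with hTdef
    set U : (Fin n → ℤ) → Set (Fin n → ℝ) := fun k => (fun y => -(icoe k) + y) ⁻¹' U0 with hUdef
    have hUm : ∀ k, MeasurableSet (U k) := fun k => hU0m.preimage (measurable_const_add _)
    have hUmem : ∀ (k : Fin n → ℤ) (y : Fin n → ℝ), y ∈ U k ↔ ∀ i, (k i : ℝ) ≤ y i ∧ y i < (k i : ℝ) + 1 := by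
      intro k y
      rw [hUdef]
      simp only [Set.mem_preimage, hU0def, Set.mem_pi, Set.mem_univ, forall_true_left,
        Set.mem_Ico, Pi.add_apply, Pi.neg_apply]
      constructor
      · intro h i
        obtain ⟨h1, h2⟩ := h i
        simp only [icoe] at h1 h2
        constructor <;> linarith
      · intro h i
        obtain ⟨h1, h2⟩ := h i
        simp only [icoe]
        constructor <;> linarith
    have hUd : Pairwise (Function.onFun Disjoint U) := by
      intro k k' hkk'
      rw [Function.onFun, Set.disjoint_left]
      intro y hy hy'
      apply hkk'
      funext i
      have h1 := (hUmem k y).mp hy i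
      have h2 := (hUmem k' y).mp hy' i
      have e1 : ⌊y i⌋ = k i := Int.floor_eq_iff.mpr ⟨h1.1, h1.2⟩
      have e2 : ⌊y i⌋ = k' i := Int.floor_eq_iff.mpr ⟨h2.1, h2.2⟩
      rw [← e1, e2]
    set S := {x | ENNReal.ofReal L < maximalFn ν x} with hSdef
    have hTS : ∀ k ∈ K, T k ⊆ S ∩ U k := by
      intro k hk y hy
      rw [hTdef] at hy
      set x : Fin n → ℝ := -(icoe k) + y with hxdef
      have hyx : y = icoe k + x := by rw [hxdef]; abel
      have hxA' : x ∈ A' := hy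
      have hxA : x ∈ A := hxA'.1
      obtain ⟨hxIcc, hxM⟩ := hxA
      obtain ⟨r, hr, hrρ, hkey⟩ := hρ x hxM
      -- the shifted ball has at least as much ν-measure
      have hlow : latticeMeasure n (closedBall x r) ≤ ν (closedBall y r) := by
        rw [lattice_eq_sum hxIcc hr hrρ hρR, ← hGdef, hνapp _ measurableSet_closedBall]
        have hinj : ∀ a ∈ G, ∀ b ∈ G, a + k = b + k → a = b :=
          fun a _ b _ h => add_right_cancel h
        have himg : G.image (· + k) ⊆ B := by
          intro m' hm'
          rw [Finset.mem_image] at hm'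
          obtain ⟨m, hm, rfl⟩ := hm'
          rw [hBdef, Fintype.mem_piFinset]
          intro i
          rw [hGdef, Fintype.mem_piFinset] at hm
          have h1 := Finset.mem_Icc.mp (hm i)
          rw [hKdef, Fintype.mem_piFinset] at hk
          have h2 := Finset.mem_Icc.mp (hk i)
          rw [Finset.mem_Icc]
          constructor
          · simp only [Pi.add_apply]; omega
          · simp only [Pi.add_apply]; omega
        calc ∑ m ∈ G, (closedBall x r).indicator (1 : (Fin n → ℝ) → ℝ≥0∞) (icoe m)
            = ∑ m ∈ G, (closedBall y r).indicator (1 : (Fin n → ℝ) → ℝ≥0∞) (icoe (m + k)) := by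
              refine Finset.sum_congr rfl fun m _ => ?_
              have hiff : icoe (m + k) ∈ closedBall y r ↔ icoe m ∈ closedBall x r := by
                have he : icoe (m + k) = icoe k + icoe m := by
                  funext i; simp [icoe]; ring
                rw [he, hyx, mem_closedBall, mem_closedBall, dist_add_left]
              by_cases h : icoe m ∈ closedBall x r
              · rw [Set.indicator_of_mem h, Set.indicator_of_mem (hiff.mpr h)]
                rfl
              · rw [Set.indicator_of_notMem h,
                  Set.indicator_of_notMem (fun hc => h (hiff.mp hc))]
          _ = ∑ m' ∈ G.image (· + k), (closedBall y r).indicator (1 : (Fin n → ℝ) → ℝ≥0∞) (icoe m') :=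
              (Finset.sum_image (f := fun m' => (closedBall y r).indicator (1 : (Fin n → ℝ) → ℝ≥0∞) (icoe m')) hinj).symm
          _ ≤ ∑ m' ∈ B, (closedBall y r).indicator (1 : (Fin n → ℝ) → ℝ≥0∞) (icoe m') :=
              Finset.sum_le_sum_of_subset himg
      have hvol : volume (closedBall y r) = volume (closedBall x r) := by
        rw [vol_cube y hr.le, vol_cube x hr.le]
      have hlt : ENNReal.ofReal L * volume (closedBall y r) < ν (closedBall y r) := by
        rw [hvol]; exact lt_of_lt_of_le hkey hlow
      have hyS : y ∈ S := by
        rw [hSdef, Set.mem_setOf_eq]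
        have hvol0 : volume (closedBall y r) ≠ 0 := by
          rw [vol_cube y hr.le]
          simp only [ne_eq, ENNReal.ofReal_eq_zero, not_le]; positivity
        have hvolt : volume (closedBall y r) ≠ ⊤ := by
          rw [vol_cube y hr.le]; exact ENNReal.ofReal_ne_top
        have hdivlt : ENNReal.ofReal L < ν (closedBall y r) / volume (closedBall y r) :=
          (ENNReal.lt_div_iff_mul_lt (Or.inl hvol0) (Or.inl hvolt)).mpr hlt
        exact lt_of_lt_of_le hdivlt (le_iSup_of_le r (le_iSup_of_le hr le_rfl))
      have hyU : y ∈ U k := by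
        rw [hUdef]; exact hxA'.2
      exact ⟨hyS, hyU⟩
    have hTvol : ∀ k, volume (T k) = volume A' := fun k =>
      measure_preimage_add volume _ A'
    have hKcard : K.card = (N+1)^n := by
      rw [hKdef, Fintype.card_piFinset]
      have : (Finset.Icc (0:ℤ) N).card = N+1 := by rw [Int.card_Icc]; omega
      simp [this]
    have hBcard : B.card = (2*R+N+1)^n := by
      rw [hBdef, Fintype.card_piFinset]
      have : (Finset.Icc (-(R:ℤ)) ((R:ℤ)+N)).card = 2*R+N+1 := by rw [Int.card_Icc]; omega
      simp [this]
    have hsum : ((K.card : ℝ≥0∞)) * volume A' ≤ volume S := by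
      calc ((K.card : ℝ≥0∞)) * volume A' = ∑ k ∈ K, volume (T k) := by
            rw [Finset.sum_congr rfl fun k _ => hTvol k, Finset.sum_const, nsmul_eq_mul]
        _ ≤ ∑ k ∈ K, volume (S ∩ U k) :=
            Finset.sum_le_sum fun k hk => measure_mono (hTS k hk)
        _ ≤ volume S := carath_sum volume U hUm hUd K S
    have hw := hweak ν hνfin L hL0
    rw [← hSdef] at hw
    rw [hνuniv, hBcard] at hw
    calc ENNReal.ofReal L * volume A' * (((N+1:ℕ)):ℝ≥0∞)^n
        = ENNReal.ofReal L * (((K.card : ℝ≥0∞)) * volume A') := by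
          rw [hKcard]; push_cast; ring
      _ ≤ ENNReal.ofReal L * volume S := by gcongr
      _ ≤ ENNReal.ofReal C * (((2*R+N+1)^n : ℕ) : ℝ≥0∞) := hw
      _ = ENNReal.ofReal C * (((2*R+N+1:ℕ)):ℝ≥0∞)^n := by push_cast; ring
  -- divide and take the limit
  have hstep : ∀ N : ℕ, ENNReal.ofReal L * volume A'
      ≤ ENNReal.ofReal C * (((2*R+N+1:ℕ)):ℝ≥0∞)^n / (((N+1:ℕ)):ℝ≥0∞)^n := by
    intro N
    rw [ENNReal.le_div_iff_mul_le
      (Or.inl (pow_ne_zero _ (Nat.cast_ne_zero.mpr (Nat.succ_ne_zero N))))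
      (Or.inl (ENNReal.pow_ne_top (ENNReal.natCast_ne_top _)))]
    exact main N
  have htend : Tendsto (fun N : ℕ => ENNReal.ofReal C * (((2*R+N+1:ℕ)):ℝ≥0∞)^n / (((N+1:ℕ)):ℝ≥0∞)^n)
      atTop (nhds (ENNReal.ofReal C)) := by
    have heq : ∀ N : ℕ, ENNReal.ofReal C * (((2*R+N+1:ℕ)):ℝ≥0∞)^n / (((N+1:ℕ)):ℝ≥0∞)^n
        = ENNReal.ofReal (C * (1 + (2*R:ℝ)/(N+1))^n) := by
      intro N
      have e1 : (1 + (2*R:ℝ)/(N+1))^n = ((2*R+N+1:ℕ):ℝ)^n / ((N+1:ℕ):ℝ)^n := by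
        rw [← div_pow]
        congr 1
        have hN1 : ((N:ℝ)+1) ≠ 0 := by positivity
        push_cast
        field_simp
        ring
      rw [e1, mul_div_assoc, ENNReal.ofReal_mul hC.le,
        ENNReal.ofReal_div_of_pos (by positivity),
        ENNReal.ofReal_pow (by positivity), ENNReal.ofReal_pow (by positivity),
        ENNReal.ofReal_natCast, ENNReal.ofReal_natCast]
    rw [funext heq]
    have hreal : Tendsto (fun N : ℕ => C * (1 + (2*R:ℝ)/(N+1))^n) atTop (nhds C) := by
      have h0 : Tendsto (fun N : ℕ => (2*R:ℝ)/(N+1)) atTop (nhds 0) := by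
        have h := (tendsto_const_div_atTop_nhds_zero_nat (2*R:ℝ)).comp (tendsto_add_atTop_nat 1)
        have he : (fun N : ℕ => (2*R:ℝ)/(N+1)) = (fun m : ℕ => (2*R:ℝ)/m) ∘ (fun a : ℕ => a + 1) := by
          funext N
          simp only [Function.comp_apply]
          push_cast
          ring
        rw [he]
        exact h
      have h1 : Tendsto (fun N : ℕ => (1 + (2*R:ℝ)/(N+1))^n) atTop (nhds 1) := by
        have h2 := h0.const_add (1:ℝ)
        rw [add_zero] at h2
        simpa using h2.pow n
      have h3 := h1.const_mul C
      rw [mul_one] at h3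
      exact h3
    simpa using ENNReal.tendsto_ofReal hreal
  have hfinal : ENNReal.ofReal L * volume A' ≤ ENNReal.ofReal C :=
    ge_of_tendsto' htend hstep
  rw [← hAdef] at *
  rw [hAvol]
  exact hfinal
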